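/- arXiv:1810.00337 — 3 statements merged into one kernel-verified Lean document; each statement's English description precedes it below -/
import Mathlib

section
/- Let S and A be nonempty finite types, p : S → A → PMF S a transition kernel, r : S → A → ℝ a reward function, and γ ∈ [0,1) a discount factor. Define the Bellman optimality operator T : (S → ℝ) → (S → ℝ) by (T V)(s) = max over a ∈ A of (r(s,a) + γ · ∑_{s'} p(s'∣s,a) · V(s')). Then T is Lipschitz with constant γ with respect to the supremum norm on S → ℝ; i.e., for all V, W : S → ℝ, ‖T V − T W‖_∞ ≤ γ · ‖V − W‖_∞. -/
/-- The Bellman optimality operator of a finite MDP: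
`(T V)(s) = max_{a ∈ A} (r s a + γ * ∑ s', p(s'|s,a) * V s')`. -/
noncomputable def bellmanOpt {S A : Type*} [Fintype S] [Fintype A] [Nonempty A]
    (p : S → A → PMF S) (r : S → A → ℝ) (γ : ℝ) (V : S → ℝ) : S → ℝ :=
  fun s => Finset.univ.sup' Finset.univ_nonempty
    (fun a : A => r s a + γ * ∑ s' : S, (p s a s').toReal * V s')

lemma pmf_toReal_sum_one {S : Type*} [Fintype S] (q : PMF S) :
    ∑ s' : S, (q s').toReal = 1 := by
  have h : ∑ s' : S, q s' = 1 := by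
    rw [← tsum_eq_sum (L := SummationFilter.unconditional _) (fun x hx => absurd (Finset.mem_univ x) hx)]
    exact q.tsum_coe
  rw [← ENNReal.toReal_sum (fun a _ => ((q.coe_le_one a).trans_lt ENNReal.one_lt_top).ne), h]
  simp

/-- The Bellman optimality operator is a `γ`-Lipschitz map in the sup norm. -/
theorem bellmanOpt_lipschitz {S A : Type*} [Fintype S] [Fintype A]
    [Nonempty S] [Nonempty A]
    (p : S → A → PMF S) (r : S → A → ℝ) (γ : ℝ) (hγ0 : 0 ≤ γ) (hγ1 : γ < 1) :
    ∀ V W : S → ℝ,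
      ‖bellmanOpt p r γ V - bellmanOpt p r γ W‖ ≤ γ * ‖V - W‖ := by
  intro V W
  have hc : 0 ≤ γ * ‖V - W‖ := mul_nonneg hγ0 (norm_nonneg _)
  rw [pi_norm_le_iff_of_nonneg hc]
  intro s
  -- pointwise bound on each action's value difference
  have key : ∀ (X Y : S → ℝ) (a : A),
      (r s a + γ * ∑ s' : S, (p s a s').toReal * X s')
        ≤ (r s a + γ * ∑ s' : S, (p s a s').toReal * Y s') + γ * ‖X - Y‖ := by
    intro X Y a
    have h1 : ∑ s' : S, (p s a s').toReal * X s'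
        - ∑ s' : S, (p s a s').toReal * Y s'
        = ∑ s' : S, (p s a s').toReal * (X s' - Y s') := by
      rw [← Finset.sum_sub_distrib]
      exact Finset.sum_congr rfl (fun s' _ => by ring)
    have h2 : ∑ s' : S, (p s a s').toReal * (X s' - Y s') ≤ ‖X - Y‖ := by
      calc ∑ s' : S, (p s a s').toReal * (X s' - Y s')
          ≤ ∑ s' : S, (p s a s').toReal * ‖X - Y‖ := by
            refine Finset.sum_le_sum (fun s' _ => ?_)
            refine mul_le_mul_of_nonneg_left ?_ ENNReal.toReal_nonneg
            have h3 : |X s' - Y s'| ≤ ‖X - Y‖ := by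
              simpa [Real.norm_eq_abs] using norm_le_pi_norm (X - Y) s'
            exact (abs_le.mp h3).2
        _ = ‖X - Y‖ := by rw [← Finset.sum_mul, pmf_toReal_sum_one, one_mul]
    nlinarith [h2, h1, mul_le_mul_of_nonneg_left h2 hγ0]
  have hsup : ∀ X Y : S → ℝ,
      bellmanOpt p r γ X s ≤ bellmanOpt p r γ Y s + γ * ‖X - Y‖ := by
    intro X Y
    refine Finset.sup'_le _ _ (fun a _ => ?_)
    exact (key X Y a).trans (by
      gcongr
      exact Finset.le_sup' (fun a : A => r s a + γ * ∑ s' : S, (p s a s').toReal * Y s')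
        (Finset.mem_univ a))
  have hVW := hsup V W
  have hWV := hsup W V
  have hnorm : ‖W - V‖ = ‖V - W‖ := norm_sub_rev W V
  rw [hnorm] at hWV
  simp only [Pi.sub_apply, Real.norm_eq_abs, abs_le]
  constructor <;> linarith
end

section
/- Let S and A be nonempty finite types, p : S → A → PMF S, r : S → A → ℝ, γ ∈ [0,1), and V* the unique fixed point of the Bellman optimality operator T. Let π* : S → A be any greedy policy with respect to V*, i.e., for every s ∈ S, π*(s) attains the maximum of a ↦ r(s,a) + γ · ∑_{s'} p(s'∣s,a) · V*(s'). Then V^{π*} = V*; in particular there exists a stationary deterministic policy whose value function equals the optimal value function. -/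
/-- The policy evaluation operator for a stationary deterministic policy `π`. -/
noncomputable def polEval {S A : Type*} [Fintype S]
    (p : S → A → PMF S) (r : S → A → ℝ) (γ : ℝ) (π : S → A) (V : S → ℝ) : S → ℝ :=
  fun s => r s (π s) + γ * ∑ s' : S, (p s (π s) s').toReal * V s'

/-- Any policy that is greedy with respect to the optimal value function `V*`
has value function equal to `V*`; in particular some stationary deterministic
policy is optimal. -/
theorem greedy_policy_is_optimal {S A : Type*} [Fintype S] [Fintype A]
    [Nonempty S] [Nonempty A]
    (p : S → A → PMF S) (r : S → A → ℝ) (γ : ℝ) (hγ0 : 0 ≤ γ) (hγ1 : γ < 1)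
    (Vstar : S → ℝ) (hVstar : bellmanOpt p r γ Vstar = Vstar)
    (π : S → A)
    (hgreedy : ∀ s, ∀ a : A,
      r s a + γ * ∑ s' : S, (p s a s').toReal * Vstar s' ≤
        r s (π s) + γ * ∑ s' : S, (p s (π s) s').toReal * Vstar s')
    (Vπ : S → ℝ) (hVπ : polEval p r γ π Vπ = Vπ) :
    Vπ = Vstar := by
  have hsum : ∀ s a, ∑ s' : S, ((p s a) s').toReal = 1 := by
    intro s a
    rw [← ENNReal.toReal_sum (fun _ _ => PMF.apply_ne_top _ _), ← tsum_fintype (L := SummationFilter.unconditional _),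
      (p s a).tsum_coe, ENNReal.toReal_one]
  -- Vstar is a fixed point of polEval
  have hfix : ∀ s, r s (π s) + γ * ∑ s' : S, (p s (π s) s').toReal * Vstar s' = Vstar s := by
    intro s
    have h1 : bellmanOpt p r γ Vstar s = Vstar s := congrFun hVstar s
    have h2 : bellmanOpt p r γ Vstar s
        = r s (π s) + γ * ∑ s' : S, (p s (π s) s').toReal * Vstar s' := by
      simp only [bellmanOpt]
      apply le_antisymm
      · exact Finset.sup'_le Finset.univ_nonempty
          (fun a : A => r s a + γ * ∑ s' : S, (p s a s').toReal * Vstar s')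
          (fun a _ => hgreedy s a)
      · exact Finset.le_sup'
          (fun a : A => r s a + γ * ∑ s' : S, (p s a s').toReal * Vstar s')
          (Finset.mem_univ (π s))
    rw [← h2, h1]
  set M : ℝ := Finset.univ.sup' Finset.univ_nonempty (fun s : S => |Vπ s - Vstar s|) with hM
  have hMmem : ∀ s : S, |Vπ s - Vstar s| ≤ M := fun s =>
    Finset.le_sup' (fun s : S => |Vπ s - Vstar s|) (Finset.mem_univ s)
  have hM0 : 0 ≤ M := le_trans (abs_nonneg _) (hMmem (Classical.arbitrary S))
  have key : ∀ s : S, |Vπ s - Vstar s| ≤ γ * M := by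
    intro s
    have hv : Vπ s - Vstar s
        = γ * ∑ s' : S, (p s (π s) s').toReal * (Vπ s' - Vstar s') := by
      have h1 : r s (π s) + γ * ∑ s' : S, (p s (π s) s').toReal * Vπ s' = Vπ s :=
        congrFun hVπ s
      have h2 := hfix s
      rw [← h1, ← h2]
      simp only [Finset.mul_sum]
      rw [add_sub_add_left_eq_sub, ← Finset.sum_sub_distrib]
      exact Finset.sum_congr rfl (fun i _ => by ring)
    rw [hv, abs_mul, abs_of_nonneg hγ0]
    apply mul_le_mul_of_nonneg_left _ hγ0
    calc |∑ s' : S, (p s (π s) s').toReal * (Vπ s' - Vstar s')|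
        ≤ ∑ s' : S, |(p s (π s) s').toReal * (Vπ s' - Vstar s')| :=
          Finset.abs_sum_le_sum_abs _ _
      _ ≤ ∑ s' : S, (p s (π s) s').toReal * M := by
          apply Finset.sum_le_sum
          intro s' _
          rw [abs_mul, abs_of_nonneg ENNReal.toReal_nonneg]
          exact mul_le_mul_of_nonneg_left (hMmem s') ENNReal.toReal_nonneg
      _ = M := by rw [← Finset.sum_mul, hsum, one_mul]
  have hMle : M ≤ γ * M := Finset.sup'_le _ _ (fun s _ => key s)
  have hMzero : M = 0 := by nlinarith
  funext s
  have := hMmem s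
  rw [hMzero] at this
  have := abs_nonpos_iff.mp this
  linarith [sub_eq_zero.mp this]
end

section
/- Let S and A be nonempty finite types, p : S → A → PMF S a transition kernel, γ ∈ [0,1), and r₁, r₂ : S → A → ℝ two reward functions. Let C, B ⊆ S be sets such that: (i) r₁(s,a) = r₂(s,a) for all s ∈ C and a ∈ A, and (ii) for every s ∈ C and a ∈ A the support of p(·∣s,a) is contained in C ∪ B. Let V₁ and V₂ be the unique fixed points of the Bellman optimality operators T₁ and T₂ associated with r₁ and r₂ respectively. If V₁(s) = V₂(s) for all s ∈ B \ C, then V₁(s) = V₂(s) for all s ∈ C. (The optimal value inside the region C is completely determined by the rewards in C and the optimal values on its interface B.) -/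
lemma abs_sup'_sub_sup'_le {A : Type*} [Fintype A] [Nonempty A] (f g : A → ℝ) (ε : ℝ)
    (h : ∀ a, |f a - g a| ≤ ε) :
    |Finset.univ.sup' Finset.univ_nonempty f - Finset.univ.sup' Finset.univ_nonempty g| ≤ ε := by
  have h1 : Finset.univ.sup' Finset.univ_nonempty f ≤
      Finset.univ.sup' Finset.univ_nonempty g + ε := by
    apply Finset.sup'_le
    intro a _
    have ha := h a
    rw [abs_le] at ha
    have := Finset.le_sup' g (Finset.mem_univ a)
    linarith [ha.2]
  have h2 : Finset.univ.sup' Finset.univ_nonempty g ≤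
      Finset.univ.sup' Finset.univ_nonempty f + ε := by
    apply Finset.sup'_le
    intro a _
    have ha := h a
    rw [abs_le] at ha
    have := Finset.le_sup' f (Finset.mem_univ a)
    linarith [ha.1]
  rw [abs_le]
  constructor <;> linarith

/-- If a region `C` has the same rewards under `r₁` and `r₂`, all transitions
from `C` stay in `C ∪ B`, and the optimal values agree on the interface
`B \ C`, then the optimal values agree on all of `C`. -/
theorem optimal_value_determined_by_interface {S A : Type*} [Fintype S] [Fintype A]
    [Nonempty S] [Nonempty A]
    (p : S → A → PMF S) (γ : ℝ) (hγ0 : 0 ≤ γ) (hγ1 : γ < 1)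
    (r₁ r₂ : S → A → ℝ) (C B : Set S)
    (hr : ∀ s ∈ C, ∀ a : A, r₁ s a = r₂ s a)
    (hsupp : ∀ s ∈ C, ∀ a : A, (p s a).support ⊆ C ∪ B)
    (V₁ V₂ : S → ℝ)
    (hV₁ : bellmanOpt p r₁ γ V₁ = V₁) (hV₂ : bellmanOpt p r₂ γ V₂ = V₂)
    (hB : ∀ s ∈ B \ C, V₁ s = V₂ s) :
    ∀ s ∈ C, V₁ s = V₂ s := by
  classical
  set f : S → ℝ := fun s => if s ∈ C then |V₁ s - V₂ s| else 0 with hf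
  set M : ℝ := Finset.univ.sup' Finset.univ_nonempty f with hMdef
  have hM0 : 0 ≤ M := by
    obtain ⟨s⟩ := (inferInstance : Nonempty S)
    refine le_trans ?_ (Finset.le_sup' f (Finset.mem_univ s))
    by_cases hs : s ∈ C <;> simp [hf, hs, abs_nonneg]
  have hDM : ∀ s ∈ C, |V₁ s - V₂ s| ≤ M := by
    intro s hs
    have h := Finset.le_sup' f (Finset.mem_univ s)
    simp only [hf, if_pos hs] at h
    exact h
  have hsum : ∀ s a, (∑ s' : S, (p s a s').toReal) = 1 := by
    intro s a
    rw [← ENNReal.toReal_sum (fun s' _ => PMF.apply_ne_top _ _), ← tsum_fintype (L := SummationFilter.unconditional _),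
      (p s a).tsum_coe, ENNReal.toReal_one]
  have key : ∀ s ∈ C, |V₁ s - V₂ s| ≤ γ * M := by
    intro s hs
    rw [← hV₁, ← hV₂]
    unfold bellmanOpt
    apply abs_sup'_sub_sup'_le
    intro a
    rw [hr s hs a]
    have : r₂ s a + γ * ∑ s' : S, (p s a s').toReal * V₁ s' -
        (r₂ s a + γ * ∑ s' : S, (p s a s').toReal * V₂ s')
        = γ * ∑ s' : S, (p s a s').toReal * (V₁ s' - V₂ s') := by
      simp only [Finset.mul_sum]
      rw [add_sub_add_left_eq_sub, ← Finset.sum_sub_distrib]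
      exact Finset.sum_congr rfl fun i _ => by ring
    rw [this, abs_mul, abs_of_nonneg hγ0]
    gcongr
    calc |∑ s' : S, (p s a s').toReal * (V₁ s' - V₂ s')|
        ≤ ∑ s' : S, |(p s a s').toReal * (V₁ s' - V₂ s')| := Finset.abs_sum_le_sum_abs _ _
      _ ≤ ∑ s' : S, (p s a s').toReal * M := by
          apply Finset.sum_le_sum
          intro s' _
          rw [abs_mul, abs_of_nonneg ENNReal.toReal_nonneg]
          by_cases hp : p s a s' = 0
          · simp [hp]
          · have hmem : s' ∈ (p s a).support := by
              rwa [PMF.mem_support_iff]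
            gcongr
            rcases hsupp s hs a hmem with h | h
            · exact hDM s' h
            · by_cases hC : s' ∈ C
              · exact hDM s' hC
              · have := hB s' ⟨h, hC⟩
                simp [this, hM0]
      _ = M := by rw [← Finset.sum_mul, hsum, one_mul]
  have hMle : M ≤ γ * M := by
    apply Finset.sup'_le
    intro s _
    by_cases hs : s ∈ C
    · simpa [hf, hs] using key s hs
    · simp only [hf, hs, if_false]
      positivity
  have hM : M ≤ 0 := by nlinarith
  intro s hs
  have h := (hDM s hs).trans hM
  have := abs_nonpos_iff.mp h
  linarith [sub_eq_zero.mp this]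
end
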